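/- Let X be a nonnegative random variable with regularly varying tail of index −α < 0, i.e., P(X > uy)/P(X > u) → y^{-α} as u → ∞ for every y ≥ 1. Then E[log(X/u) | X > u] → 1/α as u → ∞, provided there exists u₀ and δ > 0 with E[(log⁺(X/u))^{1+δ} | X > u] bounded uniformly in u ≥ u₀. -/

import Mathlib

open MeasureTheory Filter Set

theorem hill_consistency_regular_variation
    {Ω : Type*} [MeasureSpace Ω] (μ : Measure Ω) [IsProbabilityMeasure μ]
    (α : ℝ) (hα : 0 < α) (X : Ω → ℝ) (hXm : Measurable X)
    (hXnn : ∀ ω, 0 ≤ X ω)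
    (hpos : ∀ u : ℝ, 0 < μ {ω | u < X ω})
    (hRV : ∀ y : ℝ, 1 ≤ y →
      Tendsto (fun u : ℝ => (μ {ω | u * y < X ω}).toReal / (μ {ω | u < X ω}).toReal)
        atTop (nhds (y ^ (-α))))
    (hUI : ∃ u₀ : ℝ, ∃ δ : ℝ, 0 < δ ∧ ∃ K : ℝ, ∀ u : ℝ, u₀ ≤ u →
      (∫ ω in {ω | u < X ω}, max (Real.log (X ω / u)) 0 ^ (1 + δ) ∂μ) /
        (μ {ω | u < X ω}).toReal ≤ K) :
    Tendsto (fun u : ℝ =>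
        (∫ ω in {ω | u < X ω}, Real.log (X ω / u) ∂μ) / (μ {ω | u < X ω}).toReal)
      atTop (nhds (1 / α)) := by
  classical
  set T : ℝ → ENNReal := fun u => μ {ω | u < X ω} with hTdef
  have hSmeas : ∀ u : ℝ, MeasurableSet {ω | u < X ω} := fun u =>
    measurableSet_lt measurable_const hXm
  have hTne : ∀ u : ℝ, T u ≠ ⊤ := fun u => (measure_lt_top μ _).ne
  have hcpos : ∀ u : ℝ, 0 < (T u).toReal := fun u =>
    ENNReal.toReal_pos (hpos u).ne' (hTne u)
  have hTanti : Antitone T := fun a b hab =>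
    measure_mono (fun ω hω => lt_of_le_of_lt hab hω)
  have hTm : Measurable T := hTanti.measurable
  -- the limit of the tail ratio at `y = e`
  have he1 : (1 : ℝ) < Real.exp 1 := by
    have := Real.exp_one_gt_d9; linarith
  set L : ℝ := (Real.exp 1) ^ (-α) with hLdef
  have hL1 : L < 1 := Real.rpow_lt_one_of_one_lt_of_neg he1 (neg_neg_iff_pos.2 hα)
  have hL0 : 0 ≤ L := Real.rpow_nonneg (Real.exp_pos 1).le _
  set r : ℝ := (L + 1) / 2 with hrdef
  have hr0 : 0 < r := by positivity
  have hr1 : r < 1 := by simp only [hrdef]; linarith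
  have hLr : L < r := by simp only [hrdef]; linarith
  -- Step 1: geometric decay of the tail ratio
  obtain ⟨U0, hU0⟩ : ∃ U0 : ℝ, ∀ u : ℝ, U0 ≤ u →
      (T (u * Real.exp 1)).toReal ≤ r * (T u).toReal := by
    have h := (hRV (Real.exp 1) he1.le).eventually (eventually_lt_nhds hLr)
    obtain ⟨U0, hU0⟩ := eventually_atTop.1 h
    refine ⟨U0, fun u hu => ?_⟩
    have := hU0 u hu
    have hc := hcpos u
    rw [div_lt_iff₀ hc] at this
    exact this.le
  set U : ℝ := max U0 1 with hUdef
  have hU1 : (1 : ℝ) ≤ U := le_max_right _ _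
  have hU0' : U0 ≤ U := le_max_left _ _
  -- Step 2: iterate
  have step2 : ∀ u : ℝ, U ≤ u → ∀ n : ℕ,
      (T (u * Real.exp n)).toReal ≤ (T u).toReal * r ^ n := by
    intro u hu
    have hupos : (0 : ℝ) < u := lt_of_lt_of_le one_pos (hU1.trans hu)
    intro n
    induction n with
    | zero => simp
    | succ n ih =>
        have hun : u ≤ u * Real.exp n := by
          nlinarith [Real.one_le_exp (by positivity : (0:ℝ) ≤ (n:ℝ)), hupos]
        have h1 : (T (u * Real.exp n * Real.exp 1)).toReal
            ≤ r * (T (u * Real.exp n)).toReal :=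
          hU0 _ (hU0'.trans (hu.trans hun))
        have h2 : u * Real.exp ((n : ℝ) + 1) = u * Real.exp n * Real.exp 1 := by
          rw [Real.exp_add]; ring
        calc (T (u * Real.exp ((n + 1 : ℕ) : ℝ))).toReal
            = (T (u * Real.exp n * Real.exp 1)).toReal := by
              rw [show (((n + 1 : ℕ)) : ℝ) = (n : ℝ) + 1 by push_cast; ring, h2]
          _ ≤ r * (T (u * Real.exp n)).toReal := h1
          _ ≤ r * ((T u).toReal * r ^ n) := by
              exact mul_le_mul_of_nonneg_left ih hr0.le
          _ = (T u).toReal * r ^ (n + 1) := by ring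
  -- Step 3: continuous-parameter bound
  have step3 : ∀ u : ℝ, U ≤ u → ∀ s : ℝ, 0 ≤ s →
      (T (u * Real.exp s)).toReal ≤ (T u).toReal * r ^ (s - 1) := by
    intro u hu s hs
    have hupos : (0 : ℝ) < u := lt_of_lt_of_le one_pos (hU1.trans hu)
    set n : ℕ := ⌊s⌋₊ with hn
    have hns : (n : ℝ) ≤ s := Nat.floor_le hs
    have h1 : (T (u * Real.exp s)).toReal ≤ (T (u * Real.exp n)).toReal := by
      apply ENNReal.toReal_mono (hTne _)
      exact hTanti (by
        have := Real.exp_le_exp.2 hns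
        nlinarith)
    have h2 := step2 u hu n
    have h3 : r ^ (n : ℝ) ≤ r ^ (s - 1) := by
      apply Real.rpow_le_rpow_of_exponent_ge hr0 hr1.le
      have := Nat.sub_one_lt_floor s
      linarith
    calc (T (u * Real.exp s)).toReal ≤ (T u).toReal * r ^ n := h1.trans h2
      _ = (T u).toReal * r ^ (n : ℝ) := by rw [Real.rpow_natCast]
      _ ≤ (T u).toReal * r ^ (s - 1) :=
          mul_le_mul_of_nonneg_left h3 ENNReal.toReal_nonneg
  -- Step 4: layer-cake representation for `u ≥ 1`
  have key : ∀ u : ℝ, 1 ≤ u →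
      (∫ ω in {ω | u < X ω}, Real.log (X ω / u) ∂μ)
        = (∫⁻ t in Ioi (0:ℝ), T (u * Real.exp t)).toReal := by
    intro u hu
    have hupos : (0 : ℝ) < u := lt_of_lt_of_le one_pos hu
    set ν : Measure Ω := μ.restrict {ω | u < X ω} with hν
    set f : Ω → ℝ := fun ω => Real.log (X ω / u) with hf
    have hfm : Measurable f := Real.measurable_log.comp (hXm.div_const u)
    have hnn : 0 ≤ᵐ[ν] f := by
      refine (ae_restrict_iff' (hSmeas u)).2 (ae_of_all _ fun ω hω => Real.log_nonneg ?_)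
      rw [le_div_iff₀ hupos, one_mul]
      exact le_of_lt hω
    have hsetEq : ∀ t : ℝ, 0 < t →
        {a : Ω | t < f a} = {ω : Ω | u * Real.exp t < X ω} := by
      intro t ht
      ext a
      simp only [mem_setOf_eq, hf]
      constructor
      · intro h
        have hz : (0 : ℝ) < X a / u := by
          by_contra hc
          push_neg at hc
          have : Real.log (X a / u) ≤ 0 := Real.log_nonpos (by
            have := div_nonneg (hXnn a) hupos.le
            linarith) (by linarith [div_nonneg (hXnn a) hupos.le])
          linarith
        have : Real.exp t < Real.exp (Real.log (X a / u)) := Real.exp_lt_exp.2 h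
        rw [Real.exp_log hz] at this
        calc u * Real.exp t < u * (X a / u) := by
              exact mul_lt_mul_of_pos_left this hupos
          _ = X a := by field_simp
      · intro h
        have h1 : Real.exp t < X a / u := by
          rw [lt_div_iff₀ hupos]; linarith [h, mul_comm u (Real.exp t)]
        have := Real.log_lt_log (Real.exp_pos t) h1
        rwa [Real.log_exp] at this
    have hrest : ∀ t : ℝ, 0 < t → ν {a | t < f a} = T (u * Real.exp t) := by
      intro t ht
      rw [hν, Measure.restrict_apply (measurableSet_lt measurable_const hfm)]
      rw [hsetEq t ht]
      congr 1
      ext a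
      simp only [mem_inter_iff, mem_setOf_eq]
      constructor
      · exact fun h => h.1
      · intro h
        refine ⟨h, lt_of_lt_of_le ?_ h.le⟩
        have : (1 : ℝ) < Real.exp t := by rw [Real.one_lt_exp_iff]; exact ht
        nlinarith
    calc (∫ ω in {ω | u < X ω}, f ω ∂μ)
        = (∫⁻ ω, ENNReal.ofReal (f ω) ∂ν).toReal :=
          integral_eq_lintegral_of_nonneg_ae hnn hfm.aestronglyMeasurable
      _ = (∫⁻ t in Ioi (0:ℝ), ν {a | t < f a}).toReal := by
          rw [lintegral_eq_lintegral_meas_lt ν hnn hfm.aemeasurable]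
      _ = (∫⁻ t in Ioi (0:ℝ), T (u * Real.exp t)).toReal := by
          congr 1
          exact setLIntegral_congr_fun measurableSet_Ioi
            (fun t ht => hrest t ht)
  -- the exponential-decay dominating function
  set b : ℝ := -Real.log r with hbdef
  have hb : 0 < b := by
    simp only [hbdef]
    have := Real.log_neg hr0 hr1
    linarith
  have hrpow : ∀ t : ℝ, r ^ (t - 1) = Real.exp b * Real.exp (-b * t) := by
    intro t
    rw [Real.rpow_def_of_pos hr0, ← Real.exp_add]
    congr 1
    simp only [hbdef]; ring
  -- main sequential lemma
  have main : ∀ w : ℕ → ℝ, (∀ n, U ≤ w n) → Tendsto w atTop atTop →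
      Tendsto (fun n =>
        (∫ ω in {ω | w n < X ω}, Real.log (X ω / w n) ∂μ) / (T (w n)).toReal)
        atTop (nhds (1 / α)) := by
    intro w hwU hwT
    set G : ℕ → ℝ → ENNReal := fun n t =>
      T (w n * Real.exp t) / ENNReal.ofReal ((T (w n)).toReal) with hGdef
    have hGofReal : ∀ n, ∀ t : ℝ,
        G n t = ENNReal.ofReal ((T (w n * Real.exp t)).toReal / (T (w n)).toReal) := by
      intro n t
      rw [hGdef]
      simp only
      rw [ENNReal.ofReal_div_of_pos (hcpos (w n)), ENNReal.ofReal_toReal (hTne (w n)),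
        ENNReal.ofReal_toReal (hTne (w n * Real.exp t))]
    -- dominated convergence
    have hbound_int : ∫⁻ t in Ioi (0:ℝ),
        ENNReal.ofReal (Real.exp b * Real.exp (-b * t)) ≠ ⊤ := by
      have hint : IntegrableOn (fun t : ℝ => Real.exp b * Real.exp (-b * t)) (Ioi 0) :=
        (exp_neg_integrableOn_Ioi 0 hb).const_mul _
      rw [← ofReal_integral_eq_lintegral_ofReal hint
        (ae_of_all _ fun t => by positivity)]
      exact ENNReal.ofReal_ne_top
    have hGmeas : ∀ n, Measurable (G n) := by
      intro n
      apply Measurable.div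
      · exact hTm.comp (Real.measurable_exp.const_mul (w n))
      · exact measurable_const
    have hGbound : ∀ n, G n ≤ᵐ[volume.restrict (Ioi (0:ℝ))]
        fun t => ENNReal.ofReal (Real.exp b * Real.exp (-b * t)) := by
      intro n
      refine (ae_restrict_iff' measurableSet_Ioi).2 (ae_of_all _ fun t ht => ?_)
      show G n t ≤ ENNReal.ofReal (Real.exp b * Real.exp (-b * t))
      rw [hGofReal, ← hrpow]
      apply ENNReal.ofReal_le_ofReal
      rw [div_le_iff₀ (hcpos (w n))]
      have := step3 (w n) (hwU n) t (le_of_lt ht)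
      linarith
    have hGlim : ∀ᵐ t ∂(volume.restrict (Ioi (0:ℝ))),
        Tendsto (fun n => G n t) atTop (nhds (ENNReal.ofReal (Real.exp (-α * t)))) := by
      rw [ae_restrict_iff' measurableSet_Ioi]
      refine ae_of_all _ fun t ht => ?_
      have hRVt := hRV (Real.exp t) (Real.one_le_exp (le_of_lt ht))
      have hval : (Real.exp t) ^ (-α) = Real.exp (-α * t) := by
        rw [← Real.exp_mul]; ring_nf
      rw [hval] at hRVt
      have := (hRVt.comp hwT)
      have h2 := (ENNReal.continuous_ofReal.tendsto _).comp this
      refine h2.congr fun n => ?_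
      simp only [Function.comp]
      rw [hGofReal]
    have hlimval : ∫⁻ t in Ioi (0:ℝ), ENNReal.ofReal (Real.exp (-α * t))
        = ENNReal.ofReal (1 / α) := by
      rw [← ofReal_integral_eq_lintegral_ofReal (exp_neg_integrableOn_Ioi 0 hα)
        (ae_of_all _ fun t => (Real.exp_pos _).le)]
      congr 1
      have h := integral_comp_mul_left_Ioi (fun x : ℝ => Real.exp (-x)) 0 hα
      simp only [mul_zero, smul_eq_mul] at h
      have h2 : (∫ x : ℝ in Ioi (0:ℝ), Real.exp (-(α * x)))
          = α⁻¹ * ∫ x : ℝ in Ioi (0:ℝ), Real.exp (-x) := h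
      rw [show (fun x : ℝ => Real.exp (-α * x)) = fun x : ℝ => Real.exp (-(α * x)) by
        funext x; ring_nf]
      rw [h2, integral_exp_neg_Ioi, neg_zero, Real.exp_zero, mul_one, one_div]
    have hDCT := tendsto_lintegral_of_dominated_convergence
      (μ := volume.restrict (Ioi (0:ℝ)))
      (F := G) (f := fun t => ENNReal.ofReal (Real.exp (-α * t)))
      (fun t => ENNReal.ofReal (Real.exp b * Real.exp (-b * t)))
      hGmeas hGbound hbound_int hGlim
    rw [hlimval] at hDCT
    have htoReal := (ENNReal.tendsto_toReal ENNReal.ofReal_ne_top).comp hDCT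
    rw [show (ENNReal.ofReal (1/α)).toReal = 1/α from
      ENNReal.toReal_ofReal (by positivity)] at htoReal
    refine htoReal.congr fun n => ?_
    simp only [Function.comp]
    -- identify the integrals
    have hwn1 : (1 : ℝ) ≤ w n := hU1.trans (hwU n)
    rw [key (w n) hwn1]
    have hdiv : ∫⁻ t in Ioi (0:ℝ), G n t
        = (∫⁻ t in Ioi (0:ℝ), T (w n * Real.exp t)) / ENNReal.ofReal ((T (w n)).toReal) := by
      simp only [hGdef, div_eq_mul_inv]
      rw [lintegral_mul_const]
      exact hTm.comp (Real.measurable_exp.const_mul (w n))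
    rw [hdiv, ENNReal.toReal_div, ENNReal.toReal_ofReal ENNReal.toReal_nonneg]
  -- conclude via the sequential characterization
  rw [tendsto_iff_seq_tendsto]
  intro v hv
  obtain ⟨N, hN⟩ := eventually_atTop.1 (hv.eventually (eventually_ge_atTop U))
  rw [← tendsto_add_atTop_iff_nat N]
  have hwT : Tendsto (fun n => v (n + N)) atTop atTop :=
    hv.comp (tendsto_add_atTop_nat N)
  have hwU : ∀ n, U ≤ v (n + N) := fun n => hN (n + N) (Nat.le_add_left N n)
  exact main (fun n => v (n + N)) hwU hwT
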